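/- arXiv:2107.11663 — 2 statements merged into one kernel-verified Lean document; each statement's English description precedes it below -/
import Mathlib

section
/- For every multivariate integer polynomial f in variables x_1, …, x_m, there exist multivariate integer polynomials g and h in 2m variables y_1, …, y_m, z_1, …, z_m such that: every coefficient of g and every coefficient of h is nonnegative and even; g − h equals the polynomial obtained from 2·f by substituting x_i ↦ y_i − z_i for each i; and f has a real zero if and only if there exist real numbers y_1, …, y_m, z_1, …, z_m, all strictly greater than 1, with g(y, z) = h(y, z). -/
open MvPolynomial

theorem exists_even_nonneg_split (m : ℕ) (f : MvPolynomial (Fin m) ℤ) :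
    ∃ g h : MvPolynomial (Fin m ⊕ Fin m) ℤ,
      (∀ mono, 0 ≤ g.coeff mono ∧ Even (g.coeff mono)) ∧
      (∀ mono, 0 ≤ h.coeff mono ∧ Even (h.coeff mono)) ∧
      g - h =
        MvPolynomial.aeval
          (fun i => MvPolynomial.X (Sum.inl i) - MvPolynomial.X (Sum.inr i)) (2 * f) ∧
      ((∃ x : Fin m → ℝ, MvPolynomial.aeval x f = 0) ↔
        (∃ y z : Fin m → ℝ, (∀ i, 1 < y i) ∧ (∀ i, 1 < z i) ∧
          MvPolynomial.aeval (Sum.elim y z) g = MvPolynomial.aeval (Sum.elim y z) h)) := by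
  set F : MvPolynomial (Fin m ⊕ Fin m) ℤ :=
    MvPolynomial.aeval (fun i => MvPolynomial.X (Sum.inl i) - MvPolynomial.X (Sum.inr i)) f
    with hF
  set G : MvPolynomial (Fin m ⊕ Fin m) ℤ :=
    ∑ s ∈ F.support, MvPolynomial.monomial s (2 * max (F.coeff s) 0) with hG
  set H : MvPolynomial (Fin m ⊕ Fin m) ℤ :=
    ∑ s ∈ F.support, MvPolynomial.monomial s (2 * max (-(F.coeff s)) 0) with hH
  have hGH : G - H = 2 * F := by
    rw [hG, hH, ← Finset.sum_sub_distrib]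
    have step : ∀ s ∈ F.support,
        MvPolynomial.monomial s (2 * max (F.coeff s) 0)
          - MvPolynomial.monomial s (2 * max (-(F.coeff s)) 0)
        = MvPolynomial.monomial s (2 * F.coeff s) := by
      intro s _
      rw [← map_sub]
      congr 1
      rcases le_total (F.coeff s) 0 with hle | hle
      · rw [max_eq_right hle, max_eq_left (by omega)]; ring
      · rw [max_eq_left hle, max_eq_right (by omega)]; ring
    rw [Finset.sum_congr rfl step]
    conv_rhs => rw [F.as_sum]
    rw [Finset.mul_sum]
    refine (Finset.sum_congr rfl fun s _ => ?_).symm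
    rw [two_mul, ← map_add, ← two_mul]
  refine ⟨G, H, ?_, ?_, ?_, ?_⟩
  · intro mono
    rw [hG, MvPolynomial.coeff_sum]
    have : (∑ s ∈ F.support, ((MvPolynomial.monomial s) (2 * max (F.coeff s) 0)).coeff mono)
        = if mono ∈ F.support then 2 * max (F.coeff mono) 0 else 0 := by
      split_ifs with hm
      · rw [Finset.sum_eq_single mono]
        · simp
        · intro b _ hb; simp [MvPolynomial.coeff_monomial, hb]
        · intro hh; exact absurd hm hh
      · refine Finset.sum_eq_zero fun b hb => ?_
        have : b ≠ mono := fun e => hm (e ▸ hb)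
        simp [MvPolynomial.coeff_monomial, this]
    rw [this]
    split_ifs <;> simp [le_max_right, mul_nonneg, even_two_mul]
  · intro mono
    rw [hH, MvPolynomial.coeff_sum]
    have : (∑ s ∈ F.support, ((MvPolynomial.monomial s) (2 * max (-(F.coeff s)) 0)).coeff mono)
        = if mono ∈ F.support then 2 * max (-(F.coeff mono)) 0 else 0 := by
      split_ifs with hm
      · rw [Finset.sum_eq_single mono]
        · simp
        · intro b _ hb; simp [MvPolynomial.coeff_monomial, hb]
        · intro hh; exact absurd hm hh
      · refine Finset.sum_eq_zero fun b hb => ?_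
        have : b ≠ mono := fun e => hm (e ▸ hb)
        simp [MvPolynomial.coeff_monomial, this]
    rw [this]
    split_ifs <;> simp [le_max_right, mul_nonneg, even_two_mul]
  · rw [hGH, map_mul, map_ofNat, hF]
  · have key : ∀ y z : Fin m → ℝ,
        (MvPolynomial.aeval (Sum.elim y z) G = MvPolynomial.aeval (Sum.elim y z) H)
        ↔ MvPolynomial.aeval (fun i => y i - z i) f = 0 := by
      intro y z
      rw [← sub_eq_zero, ← map_sub, hGH, map_mul, map_ofNat]
      have : MvPolynomial.aeval (Sum.elim y z) F
          = MvPolynomial.aeval (fun i => y i - z i) f := by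
        rw [hF, MvPolynomial.comp_aeval_apply]
        simp
      rw [this]
      constructor
      · intro hz; nlinarith [hz]
      · intro hz; rw [hz]; ring
    constructor
    · rintro ⟨x, hx⟩
      refine ⟨fun i => x i + (|x i| + 2), fun i => |x i| + 2, ?_, ?_, ?_⟩
      · intro i
        show 1 < x i + (|x i| + 2)
        have := neg_abs_le (x i); linarith
      · intro i
        show 1 < |x i| + 2
        have := abs_nonneg (x i); linarith
      · rw [key]
        have hxe : (fun i => x i + (|x i| + 2) - (|x i| + 2)) = x := by funext i; ring
        simpa [hxe] using hx
    · rintro ⟨y, z, hy, hz, he⟩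
      exact ⟨fun i => y i - z i, (key y z).mp he⟩
end

section
/- For every real algebraic number α there exist n ∈ ℕ and an integer polynomial p in 1 + n variables x, y_1, …, y_n such that the set of real numbers x for which there exist reals y_1, …, y_n with p(x, y_1, …, y_n) = 0 is exactly the singleton {α}. -/
lemma aux_rat_below (R : Finset ℝ) (α : ℝ) :
    ∃ a : ℚ, (a : ℝ) < α ∧ ∀ x ∈ R, x < α → x < a := by
  classical
  set F := R.filter (fun z => z < α) with hF
  rcases F.eq_empty_or_nonempty with h | h
  · obtain ⟨a, ha⟩ := exists_rat_lt α
    refine ⟨a, ha, fun x hx hxα => ?_⟩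
    have hxF : x ∈ F := Finset.mem_filter.mpr ⟨hx, hxα⟩
    rw [h] at hxF
    exact absurd hxF (Finset.notMem_empty x)
  · have hmα : F.max' h < α := (Finset.mem_filter.mp (F.max'_mem h)).2
    obtain ⟨a, ham, haα⟩ := exists_rat_btwn hmα
    refine ⟨a, haα, fun x hx hxα => ?_⟩
    have hxF : x ∈ F := Finset.mem_filter.mpr ⟨hx, hxα⟩
    exact lt_of_le_of_lt (Finset.le_max' F x hxF) ham

lemma aux_rat_above (R : Finset ℝ) (α : ℝ) :
    ∃ b : ℚ, α < (b : ℝ) ∧ ∀ x ∈ R, α < x → (b : ℝ) < x := by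
  classical
  set F := R.filter (fun z => α < z) with hF
  rcases F.eq_empty_or_nonempty with h | h
  · obtain ⟨b, hb⟩ := exists_rat_gt α
    refine ⟨b, hb, fun x hx hxα => ?_⟩
    have hxF : x ∈ F := Finset.mem_filter.mpr ⟨hx, hxα⟩
    rw [h] at hxF
    exact absurd hxF (Finset.notMem_empty x)
  · have hmα : α < F.min' h := (Finset.mem_filter.mp (F.min'_mem h)).2
    obtain ⟨b, hαb, hbm⟩ := exists_rat_btwn hmα
    refine ⟨b, hαb, fun x hx hxα => ?_⟩
    have hxF : x ∈ F := Finset.mem_filter.mpr ⟨hx, hxα⟩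
    exact lt_of_lt_of_le hbm (Finset.min'_le F x hxF)

theorem algebraic_number_as_unique_solution (α : ℝ) (hα : IsAlgebraic ℚ α) :
    ∃ (n : ℕ) (p : MvPolynomial (Fin (n + 1)) ℤ),
      {x : ℝ | ∃ y : Fin n → ℝ, MvPolynomial.aeval (Fin.cons x y) p = 0} = {α} := by
  obtain ⟨Q, hQ0, hQα⟩ := (IsFractionRing.isAlgebraic_iff ℤ ℚ ℝ).mpr hα
  set QR : Polynomial ℝ := Q.map (Int.castRingHom ℝ) with hQR
  have hQR0 : QR ≠ 0 :=
    (Polynomial.map_ne_zero_iff (f := Int.castRingHom ℝ) Int.cast_injective).mpr hQ0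
  set R : Finset ℝ := QR.roots.toFinset with hR
  have hroot : ∀ x : ℝ, Polynomial.aeval x Q = 0 → x ∈ R := by
    intro x hx
    rw [hR, Multiset.mem_toFinset, Polynomial.mem_roots hQR0]
    rw [hQR, Polynomial.IsRoot, Polynomial.eval_map, ← algebraMap_int_eq,
      ← Polynomial.aeval_def]
    exact hx
  obtain ⟨a, haα, ha⟩ := aux_rat_below R α
  obtain ⟨b, hαb, hb⟩ := aux_rat_above R α
  set d : ℤ := (a.den : ℤ) * (b.den : ℤ) with hd
  have hdpos : (0 : ℝ) < (d : ℝ) := by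
    have ha' := a.pos
    have hb' := b.pos
    rw [hd]; push_cast; positivity
  set A : ℤ := a.num * (b.den : ℤ) with hA
  set B : ℤ := b.num * (a.den : ℤ) with hB
  have hcast : ∀ q : ℚ, (q : ℝ) * (q.den : ℝ) = (q.num : ℝ) := by
    intro q
    rw [Rat.cast_def]
    field_simp
  have hAd : (A : ℝ) = (a : ℝ) * (d : ℝ) := by
    rw [hA, hd]; push_cast; rw [← hcast a]; ring
  have hBd : (B : ℝ) = (b : ℝ) * (d : ℝ) := by
    rw [hB, hd]; push_cast; rw [← hcast b]; ring
  refine ⟨1, (Polynomial.aeval (MvPolynomial.X 0) Q) ^ 2 +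
    ((MvPolynomial.C d * MvPolynomial.X 0 - MvPolynomial.C A) *
      (MvPolynomial.C B - MvPolynomial.C d * MvPolynomial.X 0) -
      (MvPolynomial.X 1) ^ 2) ^ 2, ?_⟩
  ext x
  have heval : ∀ y : Fin 1 → ℝ,
      MvPolynomial.aeval (Fin.cons x y) ((Polynomial.aeval (MvPolynomial.X 0) Q) ^ 2 +
        ((MvPolynomial.C d * MvPolynomial.X 0 - MvPolynomial.C A) *
          (MvPolynomial.C B - MvPolynomial.C d * MvPolynomial.X 0) -
          (MvPolynomial.X 1) ^ 2) ^ 2 : MvPolynomial (Fin 2) ℤ) =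
      (Polynomial.aeval x Q) ^ 2 +
        (((d : ℝ) * x - A) * ((B : ℝ) - d * x) - (y 0) ^ 2) ^ 2 := by
    intro y
    simp only [map_add, map_pow, map_mul, map_sub, MvPolynomial.aeval_X,
      MvPolynomial.aeval_C, Fin.cons_zero]
    have h1 : (Fin.cons x y : Fin 2 → ℝ) 1 = y 0 := rfl
    rw [h1]
    congr 2
    rw [← Polynomial.aeval_algHom_apply]
    simp
  simp only [Set.mem_setOf_eq, Set.mem_singleton_iff]
  have hfact1 : ∀ z : ℝ, (d : ℝ) * z - A = (d : ℝ) * (z - a) := by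
    intro z; rw [hAd]; ring
  have hfact2 : ∀ z : ℝ, (B : ℝ) - d * z = (d : ℝ) * ((b : ℝ) - z) := by
    intro z; rw [hBd]; ring
  constructor
  · rintro ⟨y, hy⟩
    rw [heval y] at hy
    have hsq1 := sq_nonneg (Polynomial.aeval x Q)
    have hsq2 := sq_nonneg (((d : ℝ) * x - A) * ((B : ℝ) - d * x) - (y 0) ^ 2)
    have hq : Polynomial.aeval x Q = 0 := by
      have : (Polynomial.aeval x Q) ^ 2 = 0 := by nlinarith
      exact pow_eq_zero_iff (by norm_num : 2 ≠ 0) |>.mp this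
    have hprod : ((d : ℝ) * x - A) * ((B : ℝ) - d * x) - (y 0) ^ 2 = 0 := by
      have : (((d : ℝ) * x - A) * ((B : ℝ) - d * x) - (y 0) ^ 2) ^ 2 = 0 := by nlinarith
      exact pow_eq_zero_iff (by norm_num : 2 ≠ 0) |>.mp this
    have hge : ((d : ℝ) * (x - a)) * ((d : ℝ) * ((b : ℝ) - x)) ≥ 0 := by
      rw [← hfact1, ← hfact2]
      nlinarith [sq_nonneg (y 0)]
    have hxR : x ∈ R := hroot x hq
    by_contra hne
    rcases lt_or_gt_of_ne hne with hlt | hgt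
    · have hxa : x < a := ha x hxR hlt
      have h1 : (d : ℝ) * (x - a) < 0 := mul_neg_of_pos_of_neg hdpos (by linarith)
      have h2 : (0 : ℝ) < (d : ℝ) * ((b : ℝ) - x) := mul_pos hdpos (by linarith)
      nlinarith
    · have hxb : (b : ℝ) < x := hb x hxR hgt
      have h1 : (0 : ℝ) < (d : ℝ) * (x - a) := mul_pos hdpos (by linarith)
      have h2 : (d : ℝ) * ((b : ℝ) - x) < 0 := mul_neg_of_pos_of_neg hdpos (by linarith)
      nlinarith
  · rintro rfl
    refine ⟨fun _ => Real.sqrt (((d : ℝ) * x - A) * ((B : ℝ) - d * x)), ?_⟩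
    rw [heval]
    have hge : (0 : ℝ) ≤ ((d : ℝ) * x - A) * ((B : ℝ) - d * x) := by
      rw [hfact1, hfact2]
      exact mul_nonneg (mul_nonneg hdpos.le (by linarith)) (mul_nonneg hdpos.le (by linarith))
    simp only [hQα, Real.sq_sqrt hge]
    ring
end
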